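/- Let d ≥ 2 be an integer and define the integer sequence l_0 := d, l_{k+1} := ⌈(l_k − ⌊(l_k − 2)/3⌋)/2⌉. Then for every k ≥ 0, l_k ≤ (d − 3/4)(1/3)^k + 7/4. -/
import Mathlib

lemma segment_step (l : ℤ) :
    ((⌈((l : ℝ) - (⌊((l : ℝ) - 2) / 3⌋ : ℝ)) / 2⌉ : ℤ) : ℝ) ≤ (l : ℝ) / 3 + 7 / 6 := by
  set f : ℤ := ⌊((l : ℝ) - 2) / 3⌋ with hfdef
  set c : ℤ := ⌈((l : ℝ) - (f : ℝ)) / 2⌉ with hcdef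
  have hf : ((l : ℝ) - 2) / 3 - 1 < (f : ℝ) := Int.sub_one_lt_floor _
  have hf1 : ((l : ℝ) - 5) < 3 * (f : ℝ) := by linarith
  have hf2 : (l : ℤ) - 5 < 3 * f := by exact_mod_cast hf1
  have hc : (c : ℝ) < ((l : ℝ) - (f : ℝ)) / 2 + 1 := Int.ceil_lt_add_one _
  have hc1 : (2 * c : ℝ) < (l : ℝ) - (f : ℝ) + 2 := by linarith
  have hc2 : 2 * c < l - f + 2 := by exact_mod_cast hc1
  have key : 6 * c ≤ 2 * l + 7 := by omega
  have keyR : (6 * c : ℝ) ≤ 2 * (l : ℝ) + 7 := by exact_mod_cast key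
  linarith

/-- for an integer `d ≥ 2` and the integer sequence `l_0 = d`,
`l_{k+1} = ⌈(l_k − ⌊(l_k − 2)/3⌋)/2⌉`, one has `l_k ≤ (d − 3/4)(1/3)^k + 7/4` for every `k`. -/
theorem segment_length_bound (d : ℤ) (hd : 2 ≤ d) (l : ℕ → ℤ) (h0 : l 0 = d)
    (hrec : ∀ k : ℕ, l (k + 1) = ⌈((l k : ℝ) - (⌊((l k : ℝ) - 2) / 3⌋ : ℝ)) / 2⌉) :
    ∀ k : ℕ, (l k : ℝ) ≤ ((d : ℝ) - 3 / 4) * (1 / 3) ^ k + 7 / 4 := by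
  intro k
  induction k with
  | zero => simp only [h0, pow_zero]; linarith
  | succ k ih =>
    have hstep := segment_step (l k)
    rw [hrec k]
    have hpow : ((1 : ℝ) / 3) ^ (k + 1) = (1 / 3) ^ k * (1 / 3) := pow_succ _ _
    rw [hpow]
    push_cast at hstep ⊢
    nlinarith [hstep, ih]
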